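/- Consider G(n,p) on vertex set V with Y₀ = {u₁, …, u_k} ⊆ V initially blue, where the edges within Y₀ are exposed and conditioned upon, and one round of the modified forcing rule is performed in which each u ∈ Y₀ independently forces each white neighbor with probability min{1, deg_{Y₀}[u]/d̃_L}. For each u ∈ Y₀, let Y₁(u) denote the set of vertices of V ∖ Y₀ forced by u in this round. Then for any subsets S_{u₁}, …, S_{u_k} ⊆ V ∖ Y₀, for each u ∈ Y₀ and each v ∈ V ∖ (Y₀ ∪ S_u), the conditional probability satisfies P( {u,v} ∈ E(G(n,p)) | ⋂_{j=1}^{k} {Y₁(u_j) = S_{u_j}} ) ≤ p. -/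

import Mathlib

open Finset Filter Real
open scoped Classical

namespace PZF

variable {V : Type*} [Fintype V] [DecidableEq V]

/-- The closed degree of `u` into the set `B`, i.e. `|N[u] ∩ B|`. -/
noncomputable def closedDegIn (G : SimpleGraph V) (B : Finset V) (u : V) : ℕ :=
  ((insert u (G.neighborSet u)) ∩ (B : Set V)).ncard

/-- The degree of `u` in `G`. -/
noncomputable def deg (G : SimpleGraph V) (u : V) : ℕ :=
  (G.neighborSet u).ncard

/-- The probability that the blue vertex `u` forces its white neighbour `v` in one round of
probabilistic zero forcing, when the current blue set is `B`: it equals `|N[u] ∩ B| / deg u`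
when `u` is blue, `v` is a white neighbour of `u`, and `0` otherwise. -/
noncomputable def edgeForceProb (G : SimpleGraph V) (B : Finset V) (u v : V) : ℝ :=
  if G.Adj u v ∧ u ∈ B ∧ v ∉ B then (closedDegIn G B u : ℝ) / (deg G u : ℝ) else 0

/-- Given per-ordered-pair forcing probabilities `q u v` (each attempt independent), the
probability that one round starting from the blue set `B` produces exactly the blue set `B'`. -/
noncomputable def stepOfQ (q : V → V → ℝ) (B B' : Finset V) : ℝ :=
  if B ⊆ B' then
    (∏ v ∈ B' \ B, (1 - ∏ u ∈ B, (1 - q u v))) * ∏ v ∈ B'ᶜ, ∏ u ∈ B, (1 - q u v)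
  else 0

/-- The transition rule of standard probabilistic zero forcing, as a function of the history
(the list of blue sets so far; only the current blue set matters). -/
noncomputable def stdStep (G : SimpleGraph V) (hist : List (Finset V)) (B' : Finset V) : ℝ :=
  stepOfQ (edgeForceProb G (hist.getLastD ∅)) (hist.getLastD ∅) B'

/-- Probability of a given future trajectory, given the history so far. -/
noncomputable def seqProbAux (step : List (Finset V) → Finset V → ℝ) :
    List (Finset V) → List (Finset V) → ℝ
  | _, [] => 1
  | hist, B :: rest => step hist B * seqProbAux step (hist ++ [B]) rest

/-- The probability that, running the process given by the transition rule `step` from the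
initial blue set `S` for `ℓ` rounds, the resulting trajectory (including the initial set)
satisfies the predicate `E`. -/
noncomputable def trajEventProb (step : List (Finset V) → Finset V → ℝ) (S : Finset V)
    (ℓ : ℕ) (E : List (Finset V) → Prop) : ℝ :=
  ∑ f : Fin ℓ → Finset V,
    if E (S :: List.ofFn f) then seqProbAux step [S] (List.ofFn f) else 0

/-- `P(A(S,T,ℓ))`: the probability that, starting probabilistic zero forcing from the blue
set `S`, after `ℓ` rounds every vertex of `T` is blue. -/
noncomputable def probForced (G : SimpleGraph V) (S T : Finset V) (ℓ : ℕ) : ℝ :=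
  trajEventProb (stdStep G) S ℓ fun traj => T ⊆ traj.getLastD ∅

/-- `P(pt_pzf(G,S) ≤ ℓ)`: the probability that all vertices are blue after `ℓ` rounds. -/
noncomputable def probAllBlue (G : SimpleGraph V) (S : Finset V) (ℓ : ℕ) : ℝ :=
  probForced G S Finset.univ ℓ

/-- The probability of a fixed graph `G` under the Erdős–Rényi measure `G(n,p)`. -/
noncomputable def erProb (n : ℕ) (p : ℝ) (G : SimpleGraph (Fin n)) : ℝ :=
  p ^ G.edgeSet.ncard * (1 - p) ^ (n.choose 2 - G.edgeSet.ncard)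

/-- The probability that `G(n,p)` satisfies the property `E`. -/
noncomputable def graphProb (n : ℕ) (p : ℝ) (E : SimpleGraph (Fin n) → Prop) : ℝ :=
  ∑ G : SimpleGraph (Fin n), if E G then erProb n p G else 0

/-- `P(pt_pzf(G(n,p), v) ≤ ℓ)`: the joint probability (over the random graph and the forcing
randomness) that probabilistic zero forcing started at `{v}` turns all of `G(n,p)` blue
within `ℓ` rounds. -/
noncomputable def prPZFwithin (n : ℕ) (p : ℝ) (v : Fin n) (ℓ : ℕ) : ℝ :=
  ∑ G : SimpleGraph (Fin n), erProb n p G * probAllBlue G {v} ℓ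

/-- Sample space for one round of the modified forcing rule on `G(n,p)` : a configuration of
potential edges together with a configuration of forcing coins for each ordered pair. -/
abbrev Omega (n : ℕ) := (Sym2 (Fin n) → Bool) × (Fin n × Fin n → Bool)

/-- Bernoulli weight. -/
noncomputable def bern (r : ℝ) (b : Bool) : ℝ := if b then r else 1 - r

/-- The modified forcing probability `min {1, deg_{Y₀}[u] / d̃_L}`, where the closed degree of
`u` into `Y₀` is computed in the exposed (conditioned) graph `H` of edges within `Y₀`. -/
noncomputable def forceP (n : ℕ) (dL : ℝ) (H : SimpleGraph (Fin n)) (Y₀ : Finset (Fin n))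
    (u : Fin n) : ℝ :=
  min 1 ((closedDegIn H Y₀ u : ℝ) / dL)

/-- The weight of a configuration: each potential edge appears independently with probability
`p`, and the forcing coin of a pair `(u, v)` with `u ∈ Y₀`, `v ∉ Y₀` succeeds independently
with probability `min {1, deg_{Y₀}[u] / d̃_L}` (the remaining coins are unused randomness). -/
noncomputable def wt (n : ℕ) (p dL : ℝ) (H : SimpleGraph (Fin n)) (Y₀ : Finset (Fin n))
    (ω : Omega n) : ℝ :=
  (∏ e : Sym2 (Fin n), bern p (ω.1 e)) *
    ∏ x : Fin n × Fin n,
      bern (if x.1 ∈ Y₀ ∧ x.2 ∉ Y₀ then forceP n dL H Y₀ x.1 else p) (ω.2 x)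

/-- Probability of an event, conditionally on the exposed edges within `Y₀` (recorded in `H`). -/
noncomputable def Pr (n : ℕ) (p dL : ℝ) (H : SimpleGraph (Fin n)) (Y₀ : Finset (Fin n))
    (E : Omega n → Prop) : ℝ :=
  ∑ ω : Omega n, if E ω then wt n p dL H Y₀ ω else 0

/-- `Y₁(u)`: the set of vertices of `V \\ Y₀` forced by `u` in this round, namely the white
vertices `v` joined to `u` by an edge whose forcing coin succeeded. -/
noncomputable def Y1 (n : ℕ) (Y₀ : Finset (Fin n)) (u : Fin n) (ω : Omega n) : Finset (Fin n) :=
  Finset.univ.filter fun v => v ∉ Y₀ ∧ ω.1 s(u, v) = true ∧ ω.2 (u, v) = true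

end PZF

section Aux
open PZF

lemma bern_nonneg {r : ℝ} (h0 : 0 ≤ r) (h1 : r ≤ 1) (b : Bool) : 0 ≤ PZF.bern r b := by
  cases b <;> simp [PZF.bern] <;> linarith

lemma wt_nonneg {n : ℕ} {p dL : ℝ} (hp0 : 0 ≤ p) (hp1 : p ≤ 1) (hdL : 0 < dL)
    (H : SimpleGraph (Fin n)) (Y₀ : Finset (Fin n)) (ω : PZF.Omega n) :
    0 ≤ PZF.wt n p dL H Y₀ ω := by
  unfold PZF.wt
  apply mul_nonneg
  · exact Finset.prod_nonneg fun e _ => bern_nonneg hp0 hp1 _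
  · refine Finset.prod_nonneg fun x _ => ?_
    by_cases h : x.1 ∈ Y₀ ∧ x.2 ∉ Y₀
    · rw [if_pos h]
      refine bern_nonneg ?_ ?_ _
      · exact le_min zero_le_one (div_nonneg (Nat.cast_nonneg _) hdL.le)
      · exact min_le_left _ _
    · rw [if_neg h]; exact bern_nonneg hp0 hp1 _

end Aux

/-- With `Y₀` initially blue, the edges within `Y₀` exposed (recorded in
`H`) and one round of the modified forcing rule performed, for any prescribed outcomes
`S u = Y₁(u)` for the blue vertices `u ∈ Y₀`, any `u ∈ Y₀` and any `v ∉ Y₀ ∪ S u`, the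
conditional probability that `{u, v}` is an edge of `G(n,p)` given `⋂_{u ∈ Y₀} {Y₁(u) = S u}`
is at most `p`. -/
theorem edge_prob_conditional_bound
    (n : ℕ) (p dL : ℝ) (hp0 : 0 ≤ p) (hp1 : p ≤ 1) (hdL : 0 < dL)
    (H : SimpleGraph (Fin n)) (Y₀ : Finset (Fin n))
    (S : Fin n → Finset (Fin n)) (hS : ∀ u ∈ Y₀, ∀ w ∈ S u, w ∉ Y₀)
    (u v : Fin n) (hu : u ∈ Y₀) (hv : v ∉ Y₀) (hvS : v ∉ S u) :
    PZF.Pr n p dL H Y₀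
        (fun ω => ω.1 s(u, v) = true ∧ ∀ w ∈ Y₀, PZF.Y1 n Y₀ w ω = S w) /
      PZF.Pr n p dL H Y₀ (fun ω => ∀ w ∈ Y₀, PZF.Y1 n Y₀ w ω = S w) ≤ p := by
  classical
  set e₀ : Sym2 (Fin n) := s(u, v) with he₀
  set W : PZF.Omega n → ℝ := PZF.wt n p dL H Y₀ with hW
  have hWnn : ∀ ω, 0 ≤ W ω := fun ω => wt_nonneg hp0 hp1 hdL H Y₀ ω
  set E : PZF.Omega n → Prop := fun ω => ∀ w ∈ Y₀, PZF.Y1 n Y₀ w ω = S w with hE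
  set F : PZF.Omega n → PZF.Omega n := fun ω => (Function.update ω.1 e₀ false, ω.2) with hF
  set T₁ : Finset (PZF.Omega n) :=
    Finset.univ.filter (fun ω => E ω ∧ ω.1 e₀ = true) with hT₁
  set T₀ : Finset (PZF.Omega n) :=
    Finset.univ.filter (fun ω => E ω ∧ ω.1 e₀ = false) with hT₀
  set A : ℝ := ∑ ω ∈ T₁, W ω with hA
  set B₀ : ℝ := ∑ ω ∈ T₀, W ω with hB₀
  have hAnn : 0 ≤ A := Finset.sum_nonneg fun ω _ => hWnn ω
  have hB₀nn : 0 ≤ B₀ := Finset.sum_nonneg fun ω _ => hWnn ω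
  -- numerator equals A
  have hnum : PZF.Pr n p dL H Y₀
      (fun ω => ω.1 s(u, v) = true ∧ ∀ w ∈ Y₀, PZF.Y1 n Y₀ w ω = S w) = A := by
    rw [hA, hT₁, Finset.sum_filter, PZF.Pr]
    simp only [hW]
    apply Finset.sum_congr rfl
    intro ω _
    by_cases h : ω.1 s(u, v) = true ∧ E ω
    · rw [if_pos h, if_pos ⟨h.2, h.1⟩]
    · rw [if_neg h, if_neg (fun hc => h ⟨hc.2, hc.1⟩)]
  -- denominator equals A + B₀
  have hden : PZF.Pr n p dL H Y₀ (fun ω => ∀ w ∈ Y₀, PZF.Y1 n Y₀ w ω = S w) = A + B₀ := by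
    rw [hA, hB₀, hT₁, hT₀, Finset.sum_filter, Finset.sum_filter, PZF.Pr,
      ← Finset.sum_add_distrib]
    simp only [hW]
    apply Finset.sum_congr rfl
    intro ω _
    by_cases hEω : E ω
    · have hEω' : ∀ w ∈ Y₀, PZF.Y1 n Y₀ w ω = S w := hEω
      rw [if_pos hEω']
      cases hb : ω.1 e₀ <;> simp [hEω]
    · have hEω' : ¬ ∀ w ∈ Y₀, PZF.Y1 n Y₀ w ω = S w := hEω
      rw [if_neg hEω', if_neg (fun h => hEω h.1), if_neg (fun h => hEω h.1)]
      ring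
  -- membership facts for T₁
  have hT₁mem : ∀ ω ∈ T₁, E ω ∧ ω.1 e₀ = true := by
    intro ω hω
    simpa [hT₁] using hω
  -- F maps T₁ into T₀
  have himg : ∀ ω ∈ T₁, F ω ∈ T₀ := by
    intro ω hω
    obtain ⟨hEω, hedge⟩ := hT₁mem ω hω
    have hFE : E (F ω) := by
      intro w hw
      ext x
      simp only [PZF.Y1, Finset.mem_filter, Finset.mem_univ, true_and, hF]
      by_cases hwx : s(w, x) = e₀
      · -- then w = u and x = v
        have hcases : (w = u ∧ x = v) ∨ (w = v ∧ x = u) := by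
          rw [he₀] at hwx
          exact Sym2.eq_iff.mp hwx
        have hwu : w = u ∧ x = v := by
          rcases hcases with h | h
          · exact h
          · exact absurd hw (h.1 ▸ hv)
        obtain ⟨hw1, hx1⟩ := hwu
        subst hw1; subst hx1
        rw [hwx, Function.update_self]
        simp [hvS]
      · rw [Function.update_of_ne hwx]
        have := hEω w hw
        rw [← this]
        simp [PZF.Y1]
    have hFedge : (F ω).1 e₀ = false := by
      simp [hF, Function.update_self]
    simp only [hT₀, Finset.mem_filter, Finset.mem_univ, true_and]
    exact ⟨hFE, hFedge⟩
  -- F is injective on T₁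
  have hinj : ∀ ω ∈ T₁, ∀ ω' ∈ T₁, F ω = F ω' → ω = ω' := by
    intro ω hω ω' hω' h
    obtain ⟨_, hedge⟩ := hT₁mem ω hω
    obtain ⟨_, hedge'⟩ := hT₁mem ω' hω'
    have h1 := congrArg Prod.fst h
    have h2 := congrArg Prod.snd h
    simp only [hF] at h1 h2
    have h3 : ω.1 = ω'.1 := by
      funext e
      by_cases he : e = e₀
      · subst he; rw [hedge, hedge']
      · have := congrFun h1 e
        rwa [Function.update_of_ne he, Function.update_of_ne he] at this
    exact Prod.ext h3 h2
  -- pointwise weight relation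
  have hkey : ∀ ω ∈ T₁, (1 - p) * W ω = p * W (F ω) := by
    intro ω hω
    obtain ⟨_, hedge⟩ := hT₁mem ω hω
    have hsplit1 : (∏ e : Sym2 (Fin n), PZF.bern p (ω.1 e)) =
        PZF.bern p (ω.1 e₀) * ∏ e ∈ Finset.univ.erase e₀, PZF.bern p (ω.1 e) :=
      (Finset.mul_prod_erase Finset.univ _ (Finset.mem_univ e₀)).symm
    have hsplit2 : (∏ e : Sym2 (Fin n), PZF.bern p ((F ω).1 e)) =
        PZF.bern p false * ∏ e ∈ Finset.univ.erase e₀, PZF.bern p (ω.1 e) := by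
      rw [(Finset.mul_prod_erase Finset.univ _ (Finset.mem_univ e₀)).symm]
      congr 1
      · simp [hF, Function.update_self]
      · apply Finset.prod_congr rfl
        intro e he
        have hne : e ≠ e₀ := (Finset.mem_erase.mp he).1
        simp [hF, Function.update_of_ne hne]
    have hcoins : (∏ x : Fin n × Fin n,
          PZF.bern (if x.1 ∈ Y₀ ∧ x.2 ∉ Y₀ then PZF.forceP n dL H Y₀ x.1 else p) ((F ω).2 x))
        = ∏ x : Fin n × Fin n,
          PZF.bern (if x.1 ∈ Y₀ ∧ x.2 ∉ Y₀ then PZF.forceP n dL H Y₀ x.1 else p) (ω.2 x) := by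
      rfl
    rw [hW]
    unfold PZF.wt
    have hbt : PZF.bern p true = p := by simp [PZF.bern]
    have hbf : PZF.bern p false = 1 - p := by simp [PZF.bern]
    rw [hsplit1, hsplit2, hcoins, hedge, hbt, hbf]
    ring
  -- the main inequality
  have hmain : (1 - p) * A ≤ p * B₀ := by
    have h1 : (1 - p) * A = ∑ ω ∈ T₁, (1 - p) * W ω := Finset.mul_sum _ _ _
    have h2 : ∑ ω ∈ T₁, (1 - p) * W ω = p * ∑ ω ∈ T₁, W (F ω) := by
      rw [Finset.mul_sum]
      exact Finset.sum_congr rfl hkey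
    have h3 : ∑ ω ∈ T₁, W (F ω) = ∑ ω' ∈ T₁.image F, W ω' :=
      (Finset.sum_image hinj).symm
    have h4 : ∑ ω' ∈ T₁.image F, W ω' ≤ B₀ := by
      apply Finset.sum_le_sum_of_subset_of_nonneg
      · intro ω' hω'
        obtain ⟨ω, hω, rfl⟩ := Finset.mem_image.mp hω'
        exact himg ω hω
      · intro ω _ _; exact hWnn ω
    calc (1 - p) * A = p * ∑ ω ∈ T₁, W (F ω) := by rw [h1, h2]
      _ = p * ∑ ω' ∈ T₁.image F, W ω' := by rw [h3]
      _ ≤ p * B₀ := mul_le_mul_of_nonneg_left h4 hp0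
  have hfin : A ≤ p * (A + B₀) := by nlinarith
  rw [hnum, hden]
  rcases eq_or_lt_of_le (add_nonneg hAnn hB₀nn) with h | h
  · have hA0 : A = 0 := by nlinarith
    rw [hA0, zero_div]
    exact hp0
  · rw [div_le_iff₀ h]
    exact hfin
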